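/- Soundness of the Folk characterization for weak SPEs: if an initialized quantitative game (G, v_0) has a weak SPE σ̄, then for every history hv the set P_{α*}(hv) is nonempty and, moreover, the outcome of σ̄ from v_0 belongs to P_{α*}(v_0). In fact, for every ordinal α and every history hv, the outcome of the induced profile σ̄|_h from v is an element of P_α(hv). -/

import Mathlib

open Classical

noncomputable section

/-- A multiplayer turn-based quantitative game on a directed graph:
`owner` assigns each vertex to a player, `E` is the edge relation (every
vertex has a successor), and `cost i` is player `i`'s cost function on
infinite sequences of vertices (to be minimized), valued in `ℝ ∪ {±∞}`. -/
structure QGame (P V : Type) where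
  owner : V → P
  E : V → V → Prop
  succ_exists : ∀ v, ∃ v', E v v'
  cost : P → (ℕ → V) → EReal

namespace QGame

variable {P V : Type}

/-- An infinite play of the game: consecutive vertices are joined by edges. -/
def IsPlay (G : QGame P V) (ρ : ℕ → V) : Prop := ∀ n, G.E (ρ n) (ρ (n + 1))

/-- Concatenation `hρ` of a finite history `h` with an infinite play `ρ`. -/
def prepend (h : List V) (ρ : ℕ → V) : ℕ → V := fun n =>
  if hn : n < h.length then h.get ⟨n, hn⟩ else ρ (n - h.length)

/-- The prefix of length `n` of a play, as a list. -/
def playPrefix (ρ : ℕ → V) (n : ℕ) : List V := List.ofFn fun k : Fin n => ρ k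

/-- `hv` is a history of the game initialized at `v0`: here `h` is the strict
past and `v` the current vertex; the sequence `h ++ [v]` starts at `v0` and
follows edges. -/
def IsHist (G : QGame P V) (v0 : V) (h : List V) (v : V) : Prop :=
  (h ++ [v]).head? = some v0 ∧ List.Chain' G.E (h ++ [v])

/-- A (turn-based) strategy profile: given the past history and the current
vertex, choose the next vertex.  An individual strategy of player `i` is of
the same type; only its values at vertices owned by `i` matter. -/
abbrev Strat (P V : Type) := List V → V → V

/-- A profile/strategy is valid if it always follows edges. -/
def Valid (G : QGame P V) (σ : Strat P V) : Prop := ∀ h v, G.E v (σ h v)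

/-- History/current-vertex pair produced after `n` steps of `σ` from `v`. -/
def outcomeAux (σ : Strat P V) (v : V) : ℕ → List V × V
  | 0 => ([], v)
  | n + 1 =>
      let p := outcomeAux σ v n
      (p.1 ++ [p.2], σ p.1 p.2)

/-- The outcome play of profile `σ` from initial vertex `v`. -/
def outcome (σ : Strat P V) (v : V) (n : ℕ) : V := (outcomeAux σ v n).2

/-- The profile where player `i` unilaterally deviates to strategy `τ`
from the profile `σ`. -/
def devProf (G : QGame P V) (σ τ : Strat P V) (i : P) : Strat P V :=
  fun h v => if G.owner v = i then τ h v else σ h v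

/-- The set of deviation steps of `τ` from `σ` (for player `i`, from `v`):
positions `n` along the outcome of the deviated profile where the current
vertex belongs to player `i` and `τ` disagrees with `σ`. -/
def devSteps (G : QGame P V) (σ τ : Strat P V) (i : P) (v : V) : Set ℕ :=
  {n | G.owner (outcome (G.devProf σ τ i) v n) = i ∧
       σ (outcomeAux (G.devProf σ τ i) v n).1 (outcome (G.devProf σ τ i) v n) ≠
       τ (outcomeAux (G.devProf σ τ i) v n).1 (outcome (G.devProf σ τ i) v n)}

/-- `τ` is finitely deviating from `σ`. -/
def FinDev (G : QGame P V) (σ τ : Strat P V) (i : P) (v : V) : Prop :=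
  (G.devSteps σ τ i v).Finite

/-- `τ` is one-shot deviating from `σ`: its unique deviation step is at the
initial vertex. -/
def OneShotDev (G : QGame P V) (σ τ : Strat P V) (i : P) (v : V) : Prop :=
  G.devSteps σ τ i v = {0}

/-- Nash equilibrium of the profile `σ` from `v`, with respect to a cost
assignment `c` (no player has a profitable unilateral deviation). -/
def IsNEwith (G : QGame P V) (c : P → (ℕ → V) → EReal) (σ : Strat P V) (v : V) : Prop :=
  ∀ i τ, G.Valid τ →
    c i (outcome σ v) ≤ c i (outcome (G.devProf σ τ i) v)

/-- Weak Nash equilibrium: no profitable finitely deviating strategy. -/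
def IsWeakNEwith (G : QGame P V) (c : P → (ℕ → V) → EReal) (σ : Strat P V) (v : V) : Prop :=
  ∀ i τ, G.Valid τ → G.FinDev σ τ i v →
    c i (outcome σ v) ≤ c i (outcome (G.devProf σ τ i) v)

/-- Very weak Nash equilibrium: no profitable one-shot deviating strategy. -/
def IsVeryWeakNEwith (G : QGame P V) (c : P → (ℕ → V) → EReal) (σ : Strat P V) (v : V) : Prop :=
  ∀ i τ, G.Valid τ → G.OneShotDev σ τ i v →
    c i (outcome σ v) ≤ c i (outcome (G.devProf σ τ i) v)

/-- The strategy profile induced by `σ` in the subgame after history `h`. -/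
def subStrat (σ : Strat P V) (h : List V) : Strat P V := fun g v => σ (h ++ g) v

/-- The cost functions of the subgame after history `h`. -/
def subCost (G : QGame P V) (h : List V) : P → (ℕ → V) → EReal :=
  fun i ρ => G.cost i (prepend h ρ)

/-- Subgame perfect equilibrium: Nash equilibrium in every subgame. -/
def IsSPE (G : QGame P V) (v0 : V) (σ : Strat P V) : Prop :=
  ∀ h v, G.IsHist v0 h v → G.IsNEwith (G.subCost h) (subStrat σ h) v

/-- Weak subgame perfect equilibrium: weak NE in every subgame. -/
def IsWeakSPE (G : QGame P V) (v0 : V) (σ : Strat P V) : Prop :=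
  ∀ h v, G.IsHist v0 h v → G.IsWeakNEwith (G.subCost h) (subStrat σ h) v

/-- Very weak subgame perfect equilibrium: very weak NE in every subgame. -/
def IsVeryWeakSPE (G : QGame P V) (v0 : V) (σ : Strat P V) : Prop :=
  ∀ h v, G.IsHist v0 h v → G.IsVeryWeakNEwith (G.subCost h) (subStrat σ h) v

/-- One elimination step: `ρ` (a potential outcome in the subgame after `h`)
is erased if some player `i` controlling a vertex `ρ n` along `hρ` has an
alternative edge to some `v' ≠ ρ (n+1)` such that every play `ρ'` in the
current potential set after the extended history gives `i` a strictly
smaller cost than `hρ`. -/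
def Eset (G : QGame P V) (Pr : List V → V → Set (ℕ → V)) (h : List V) :
    Set (ℕ → V) :=
  {ρ | ∃ n v', G.E (ρ n) v' ∧ v' ≠ ρ (n + 1) ∧
      ∀ ρ' ∈ Pr (h ++ playPrefix ρ (n + 1)) v',
        G.cost (G.owner (ρ n)) (prepend (h ++ playPrefix ρ (n + 1)) ρ') <
          G.cost (G.owner (ρ n)) (prepend h ρ)}

/-- The transfinite sequence `P_α(hv)` of sets of potential outcomes of weak
Nash equilibria in the subgame `(G|_h, v)`: all plays at stage `0`, removal
of `E_α` at successors, intersections at limits. -/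
def Pset (G : QGame P V) (α : Ordinal) : List V → V → Set (ℕ → V) :=
  Ordinal.limitRecOn (motive := fun _ => List V → V → Set (ℕ → V)) α
    (fun _h v => {ρ | G.IsPlay ρ ∧ ρ 0 = v})
    (fun _ Pr => fun h v => Pr h v \ G.Eset Pr h)
    (fun α _ Pr => fun h v => ⋂ (β : Ordinal) (hβ : β < α), Pr β hβ h v)

/-- A sequence of plays converges to `ρ` (in the product topology on `V^ω`
with `V` discrete) iff every finite prefix of `ρ` is eventually a prefix of
the members of the sequence. -/
def Converges (ρs : ℕ → ℕ → V) (ρ : ℕ → V) : Prop :=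
  ∀ m, ∃ N, ∀ n ≥ N, ∀ k ≤ m, ρs n k = ρ k

/-- Upper semicontinuity of a cost function on plays. -/
def USCcost (G : QGame P V) (c : (ℕ → V) → EReal) : Prop :=
  ∀ (ρs : ℕ → ℕ → V) (ρ : ℕ → V), (∀ n, G.IsPlay (ρs n)) → G.IsPlay ρ →
    Converges ρs ρ →
      Filter.limsup (fun n => c (ρs n)) Filter.atTop ≤ c ρ

/-- A strategy (profile) is finite-memory if it is computed by a Moore
machine: a finite set `M` of memory states, updated while reading the
history, determines the move. -/
def FinMem (σ : Strat P V) : Prop :=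
  ∃ (M : Type) (_ : Finite M) (m0 : M) (upd : M → V → M) (act : M → V → V),
    ∀ h v, σ h v = act (h.foldl upd m0) v

/-- Quantitative reachability cost: the least index at which `ρ` visits the
target set `T`, and `+∞` if `T` is never visited. -/
def reachCost (T : Set V) (ρ : ℕ → V) : EReal :=
  if h : ∃ n, ρ n ∈ T then ((Nat.find h : ℕ) : EReal) else ⊤

/-- `G` is a quantitative reachability game with target sets `T i`. -/
def IsReachGame (G : QGame P V) (T : P → Set V) : Prop :=
  ∀ i ρ, G.cost i ρ = reachCost (T i) ρ

/-- The set of players that have not visited their target set along the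
history `h`. -/
def Iset (T : P → Set V) (h : List V) : Set P := {i | ∀ u ∈ h, u ∉ T i}

end QGame

namespace QGame

variable {P V : Type}

lemma playPrefix_length (ρ : ℕ → V) (n : ℕ) : (playPrefix ρ n).length = n := by
  simp [playPrefix]

lemma playPrefix_succ (ρ : ℕ → V) (n : ℕ) :
    playPrefix ρ (n + 1) = playPrefix ρ n ++ [ρ n] := by
  show List.ofFn _ = List.ofFn _ ++ _
  rw [List.ofFn_succ']
  simp only [List.concat_eq_append, Fin.coe_castSucc, Fin.val_last]

lemma outcomeAux_fst (σ : Strat P V) (v : V) (n : ℕ) :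
    (outcomeAux σ v n).1 = playPrefix (outcome σ v) n := by
  induction n with
  | zero => simp [outcomeAux, playPrefix]
  | succ n ih =>
      simp only [outcomeAux, playPrefix_succ, ih]
      rfl

lemma outcomeAux_length (σ : Strat P V) (v : V) (n : ℕ) :
    (outcomeAux σ v n).1.length = n := by
  rw [outcomeAux_fst, playPrefix_length]

lemma outcome_zero (σ : Strat P V) (v : V) : outcome σ v 0 = v := rfl

lemma outcome_succ (σ : Strat P V) (v : V) (n : ℕ) :
    outcome σ v (n + 1) = σ (playPrefix (outcome σ v) n) (outcome σ v n) := by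
  show σ (outcomeAux σ v n).1 (outcomeAux σ v n).2 = _
  rw [outcomeAux_fst]
  rfl

lemma isPlay_outcome {G : QGame P V} {σ : Strat P V} (hσ : G.Valid σ) (v : V) :
    G.IsPlay (outcome σ v) := by
  intro n
  rw [outcome_succ]
  exact hσ _ _

lemma valid_subStrat {G : QGame P V} {σ : Strat P V} (hσ : G.Valid σ) (h : List V) :
    G.Valid (subStrat σ h) := fun g w => hσ _ _

lemma outcomeAux_congr (σ₁ σ₂ : Strat P V) (v : V) (n : ℕ)
    (hag : ∀ k < n, σ₁ (outcomeAux σ₂ v k).1 (outcomeAux σ₂ v k).2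
                  = σ₂ (outcomeAux σ₂ v k).1 (outcomeAux σ₂ v k).2) :
    outcomeAux σ₁ v n = outcomeAux σ₂ v n := by
  induction n with
  | zero => rfl
  | succ n ih =>
      have h1 := ih (fun k hk => hag k (Nat.lt_succ_of_lt hk))
      simp only [outcomeAux, h1]
      rw [hag n (Nat.lt_succ_self n)]

lemma outcomeAux_add (σ : Strat P V) (v : V) (m k : ℕ) :
    outcomeAux σ v (m + k) =
      ((outcomeAux σ v m).1 ++
        (outcomeAux (subStrat σ (outcomeAux σ v m).1) (outcomeAux σ v m).2 k).1,
       (outcomeAux (subStrat σ (outcomeAux σ v m).1) (outcomeAux σ v m).2 k).2) := by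
  induction k with
  | zero => simp [outcomeAux]
  | succ k ih =>
      show (let p := outcomeAux σ v (m + k); (p.1 ++ [p.2], σ p.1 p.2)) = _
      simp only [outcomeAux, ih, subStrat, List.append_assoc]

lemma playPrefix_get (ρ : ℕ → V) (n m : ℕ) (hm : m < (playPrefix ρ n).length) :
    (playPrefix ρ n).get ⟨m, hm⟩ = ρ m := by
  simp [playPrefix]

lemma prepend_append (a b : List V) (ρ : ℕ → V) :
    prepend (a ++ b) ρ = prepend a (prepend b ρ) := by
  funext n
  simp only [prepend, List.length_append, List.get_eq_getElem]
  by_cases h2 : n < a.length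
  · rw [dif_pos (show n < a.length + b.length by omega), dif_pos h2,
      List.getElem_append_left h2]
  · by_cases h1 : n < a.length + b.length
    · have hb : n - a.length < b.length := by omega
      rw [dif_pos h1, dif_neg h2, List.getElem_append_right (by omega), dif_pos hb]
    · have hb : ¬ n - a.length < b.length := by omega
      rw [dif_neg h1, dif_neg h2, dif_neg hb]
      congr 1
      omega

lemma chain'_playPrefix {G : QGame P V} {ρ : ℕ → V} (hρ : G.IsPlay ρ) (n : ℕ) :
    List.Chain' G.E (playPrefix ρ n) := by
  rw [playPrefix, List.Chain', List.isChain_ofFn]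
  intro i hi
  exact hρ i

lemma getLast?_playPrefix (ρ : ℕ → V) (n : ℕ) :
    (playPrefix ρ (n + 1)).getLast? = some (ρ n) := by
  rw [playPrefix_succ]
  simp

lemma playPrefix_cons (ρ : ℕ → V) (n : ℕ) :
    playPrefix ρ (n + 1) = ρ 0 :: List.ofFn (fun k : Fin n => ρ (k + 1)) := by
  show List.ofFn _ = _
  rw [List.ofFn_succ]
  rfl

lemma head?_playPrefix (ρ : ℕ → V) (n : ℕ) :
    (playPrefix ρ (n + 1)).head? = some (ρ 0) := by
  rw [playPrefix_cons]; rfl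

lemma isHist_extend {G : QGame P V} {v0 : V} {h : List V} {v : V}
    (hh : G.IsHist v0 h v) {ρ : ℕ → V} (hρ : G.IsPlay ρ) (h0 : ρ 0 = v)
    {n : ℕ} {v' : V} (he : G.E (ρ n) v') :
    G.IsHist v0 (h ++ playPrefix ρ (n + 1)) v' := by
  obtain ⟨hhead, hchain⟩ := hh
  have hl : List.Chain' G.E (playPrefix ρ (n + 1) ++ [v']) := by
    rw [List.Chain', List.isChain_append]
    refine ⟨chain'_playPrefix hρ _, List.isChain_singleton _, ?_⟩
    intro x hx y hy
    rw [getLast?_playPrefix] at hx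
    simp only [Option.mem_def, Option.some_inj, List.head?_cons] at hx hy
    subst hx; subst hy; exact he
  have hhead' : (playPrefix ρ (n + 1) ++ [v']).head? = some v := by
    rw [playPrefix_cons]
    simp [h0]
  constructor
  · rcases h with _ | ⟨a, t⟩
    · simp only [List.nil_append] at hhead ⊢
      rw [hhead']
      simpa using hhead
    · simpa using hhead
  · rw [List.append_assoc, List.Chain', List.isChain_append]
    rw [List.Chain', List.isChain_append] at hchain
    refine ⟨hchain.1, hl, ?_⟩
    intro x hx y hy
    rw [hhead'] at hy
    simp only [Option.mem_def, Option.some_inj] at hy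
    subst hy
    exact hchain.2.2 x hx v (by simp)

lemma Pset_zero (G : QGame P V) :
    G.Pset 0 = fun _h v => {ρ | G.IsPlay ρ ∧ ρ 0 = v} :=
  Ordinal.limitRecOn_zero _ _ _

lemma Pset_succ (G : QGame P V) (α : Ordinal) :
    G.Pset (Order.succ α) = fun h v => G.Pset α h v \ G.Eset (G.Pset α) h :=
  Ordinal.limitRecOn_succ _ _ _ _

lemma Pset_limit (G : QGame P V) (α : Ordinal) (hα : Order.IsSuccLimit α) :
    G.Pset α = fun h v => ⋂ (β : Ordinal) (_ : β < α), G.Pset β h v :=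
  Ordinal.limitRecOn_limit _ _ _ _ hα

lemma outcome_mem_Pset_aux {P V : Type} (G : QGame P V) (v0 : V)
    (σ : Strat P V) (hσ : G.Valid σ) (hW : G.IsWeakSPE v0 σ)
    (α : Ordinal) (h : List V) (v : V) (hv : G.IsHist v0 h v) :
    outcome (subStrat σ h) v ∈ G.Pset α h v := by
  induction α using Ordinal.limitRecOn generalizing h v with
| zero =>
    simp only [G.Pset_zero]
    exact ⟨isPlay_outcome (valid_subStrat hσ h) v, rfl⟩
| add_one α ih =>
    rw [Ordinal.add_one_eq_succ]
    simp only [G.Pset_succ]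
    refine ⟨ih h v hv, ?_⟩
    set ρ : ℕ → V := outcome (subStrat σ h) v with hρdef
    intro hmem
    obtain ⟨n, v', he, hne, hlt⟩ := hmem
    set i : P := G.owner (ρ n) with hidef
    have hplay : G.IsPlay ρ := isPlay_outcome (valid_subStrat hσ h) v
    have hist' : G.IsHist v0 (h ++ playPrefix ρ (n + 1)) v' :=
      isHist_extend hv hplay rfl he
    set h' := h ++ playPrefix ρ (n + 1) with hh'
    set ρ' : ℕ → V := outcome (subStrat σ h') v' with hρ'def
    have hmem' : ρ' ∈ G.Pset α h' v' := ih h' v' hist'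
    have key := hlt ρ' hmem'
    set τ : Strat P V := fun g w =>
      if g = playPrefix ρ n ∧ w = ρ n then v' else σ (h ++ g) w with hτ
    have hτval : G.Valid τ := by
      intro g w
      show G.E w (if g = playPrefix ρ n ∧ w = ρ n then v' else σ (h ++ g) w)
      by_cases hc : g = playPrefix ρ n ∧ w = ρ n
      · rw [if_pos hc, hc.2]
        exact he
      · rw [if_neg hc]
        exact hσ _ _
    have hτeq : ∀ g (w : V), g.length ≠ n → τ g w = subStrat σ h g w := by
      intro g w hg
      show (if g = playPrefix ρ n ∧ w = ρ n then v' else σ (h ++ g) w)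
          = subStrat σ h g w
      rw [if_neg]
      · rfl
      · rintro ⟨h1, -⟩
        exact hg (by rw [h1, playPrefix_length])
    have hdev_eq : ∀ g (w : V), g.length ≠ n →
        G.devProf (subStrat σ h) τ i g w = subStrat σ h g w := by
      intro g w hg
      show (if G.owner w = i then τ g w else subStrat σ h g w) = _
      split_ifs with _h
      · exact hτeq g w hg
      · rfl
    have hagree : ∀ k ≤ n, outcomeAux (G.devProf (subStrat σ h) τ i) v k
        = outcomeAux (subStrat σ h) v k := by
      intro k hk
      apply outcomeAux_congr
      intro j hj
      exact hdev_eq _ _ (by rw [outcomeAux_length]; omega)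
    have hstep : outcomeAux (G.devProf (subStrat σ h) τ i) v (n + 1)
        = (playPrefix ρ (n + 1), v') := by
      have e1 : outcomeAux (G.devProf (subStrat σ h) τ i) v (n + 1)
          = ((outcomeAux (G.devProf (subStrat σ h) τ i) v n).1
              ++ [(outcomeAux (G.devProf (subStrat σ h) τ i) v n).2],
             G.devProf (subStrat σ h) τ i
               (outcomeAux (G.devProf (subStrat σ h) τ i) v n).1
               (outcomeAux (G.devProf (subStrat σ h) τ i) v n).2) := rfl
      rw [e1, hagree n le_rfl, outcomeAux_fst]
      have e2 : (outcomeAux (subStrat σ h) v n).2 = ρ n := rfl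
      rw [e2]
      have e3 : G.devProf (subStrat σ h) τ i (playPrefix ρ n) (ρ n) = v' := by
        show (if G.owner (ρ n) = i then τ (playPrefix ρ n) (ρ n)
              else subStrat σ h (playPrefix ρ n) (ρ n)) = v'
        rw [if_pos hidef.symm]
        show (if playPrefix ρ n = playPrefix ρ n ∧ ρ n = ρ n then v'
              else σ (h ++ playPrefix ρ n) (ρ n)) = v'
        rw [if_pos ⟨rfl, rfl⟩]
      rw [e3, ← playPrefix_succ]
    have hsub : subStrat (G.devProf (subStrat σ h) τ i) (playPrefix ρ (n + 1))
        = subStrat σ h' := by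
      funext g w
      show G.devProf (subStrat σ h) τ i (playPrefix ρ (n + 1) ++ g) w = σ (h' ++ g) w
      rw [hdev_eq _ _ (by rw [List.length_append, playPrefix_length]; omega)]
      show σ (h ++ (playPrefix ρ (n + 1) ++ g)) w = _
      rw [hh', List.append_assoc]
    have houtdev : outcome (G.devProf (subStrat σ h) τ i) v
        = prepend (playPrefix ρ (n + 1)) ρ' := by
      funext m
      rcases lt_or_ge m (n + 1) with hm | hm
      · have e1 : outcome (G.devProf (subStrat σ h) τ i) v m = ρ m := by
          show (outcomeAux (G.devProf (subStrat σ h) τ i) v m).2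
              = (outcomeAux (subStrat σ h) v m).2
          rw [hagree m (by omega)]
        rw [e1]
        rw [show prepend (playPrefix ρ (n + 1)) ρ' m
            = (playPrefix ρ (n + 1)).get ⟨m, by rw [playPrefix_length]; omega⟩ from
          by rw [prepend, dif_pos]]
        rw [playPrefix_get]
      · obtain ⟨k, rfl⟩ : ∃ k, m = (n + 1) + k := ⟨m - (n + 1), by omega⟩
        show (outcomeAux (G.devProf (subStrat σ h) τ i) v ((n + 1) + k)).2 = _
        rw [outcomeAux_add, hstep, hsub]
        show ρ' k = _
        rw [prepend, dif_neg (by rw [playPrefix_length]; omega)]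
        congr 1
        rw [playPrefix_length]
        omega
    have hfin : G.FinDev (subStrat σ h) τ i v := by
      apply Set.Finite.subset (Set.finite_singleton n)
      intro m hm
      obtain ⟨-, hne2⟩ := hm
      simp only [Set.mem_singleton_iff]
      by_contra hmn
      exact hne2 (hτeq _ _ (by rw [outcomeAux_length]; exact hmn)).symm
    have hWNE := hW h v hv i τ hτval hfin
    have hcost : G.subCost h i (outcome (G.devProf (subStrat σ h) τ i) v)
        = G.cost i (prepend h' ρ') := by
      show G.cost i (prepend h (outcome (G.devProf (subStrat σ h) τ i) v)) = _
      rw [houtdev, hh', prepend_append]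
    rw [hcost] at hWNE
    have hl : G.subCost h i ρ = G.cost i (prepend h ρ) := rfl
    rw [hl] at hWNE
    exact absurd hWNE (not_le_of_gt key)
| limit α hlim ih =>
    rw [G.Pset_limit α hlim]
    simp only [Set.mem_iInter]
    intro β hβ
    exact ih β hβ h v hv

end QGame

open QGame in
/-- Soundness of the Folk characterization for weak SPEs:
if `σ` is a weak SPE of `(G, v0)`, then for every ordinal `α` and every
history `hv` the outcome of the induced profile `σ|_h` from `v` belongs to
`P_α(hv)`; in particular every `P_α(hv)` (hence `P_{α*}(hv)`) is nonempty,
and the outcome of `σ` from `v0` lies in `P_α(v0)` for all `α` (hence in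
`P_{α*}(v0)`). -/
theorem weakSPE_outcome_mem_Pset {P V : Type} [Finite P] [Finite V]
    (G : QGame P V) (v0 : V) (σ : Strat P V) (hσ : G.Valid σ)
    (hW : G.IsWeakSPE v0 σ) :
    (∀ (α : Ordinal) (h : List V) (v : V), G.IsHist v0 h v →
        outcome (subStrat σ h) v ∈ G.Pset α h v) ∧
    (∀ (α : Ordinal) (h : List V) (v : V), G.IsHist v0 h v →
        (G.Pset α h v).Nonempty) ∧
    (∀ α : Ordinal, outcome σ v0 ∈ G.Pset α [] v0) := by
  refine ⟨fun α h v hv => outcome_mem_Pset_aux G v0 σ hσ hW α h v hv, 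
    fun α h v hv => ⟨_, outcome_mem_Pset_aux G v0 σ hσ hW α h v hv⟩, fun α => ?_⟩
  have hnil : G.IsHist v0 [] v0 := ⟨rfl, List.isChain_singleton v0⟩
  exact outcome_mem_Pset_aux G v0 σ hσ hW α [] v0 hnil
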